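/- arXiv:0804.0031 — 3 statements merged into one kernel-verified Lean document; each statement's English description precedes it below -/
import Mathlib

section
/- Let G and H be p×p symmetric matrices each having at least two distinct eigenvalues. If tr(H Uᵀ G U) = tr(H S Uᵀ G U S) for all orthogonal U and all diagonal sign matrices S, then H is diagonal. -/
open Matrix

lemma exists_orthogonal_entry (p : ℕ) (G : Matrix (Fin p) (Fin p) ℝ) (hG : G.IsSymm)
    (hGeig : ∃ (lam mu : ℝ) (v w : Fin p → ℝ), v ≠ 0 ∧ w ≠ 0 ∧
      G.mulVec v = lam • v ∧ G.mulVec w = mu • w ∧ lam ≠ mu)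
    (i j : Fin p) (hij : i ≠ j) :
    ∃ U : Matrix (Fin p) (Fin p) ℝ, Uᵀ * U = 1 ∧ (Uᵀ * G * U) i j ≠ 0 := by
  obtain ⟨lam, mu, v, w, hv0, hw0, hGv, hGw, hlm⟩ := hGeig
  -- v and w are orthogonal
  have hvw : v ⬝ᵥ w = 0 := by
    have h1 : w ⬝ᵥ (G *ᵥ v) = lam * (v ⬝ᵥ w) := by
      rw [hGv, dotProduct_smul, dotProduct_comm]; simp [smul_eq_mul]
    have h2 : w ⬝ᵥ (G *ᵥ v) = mu * (v ⬝ᵥ w) := by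
      rw [dotProduct_mulVec, ← mulVec_transpose, hG.eq, hGw, smul_dotProduct,
        dotProduct_comm]; simp [smul_eq_mul]
    have := sub_ne_zero.mpr hlm
    have h3 : (lam - mu) * (v ⬝ᵥ w) = 0 := by rw [sub_mul, ← h1, ← h2, sub_self]
    rcases mul_eq_zero.mp h3 with h | h
    · exact absurd (sub_eq_zero.mp h) hlm
    · exact h
  -- normalize
  have hvpos : 0 < v ⬝ᵥ v := by
    rcases lt_or_eq_of_le (Finset.sum_nonneg fun k _ => mul_self_nonneg (v k) : 0 ≤ v ⬝ᵥ v) with h | h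
    · exact h
    · exact absurd (dotProduct_self_eq_zero.mp h.symm) hv0
  have hwpos : 0 < w ⬝ᵥ w := by
    rcases lt_or_eq_of_le (Finset.sum_nonneg fun k _ => mul_self_nonneg (w k) : 0 ≤ w ⬝ᵥ w) with h | h
    · exact h
    · exact absurd (dotProduct_self_eq_zero.mp h.symm) hw0
  set v' : Fin p → ℝ := (Real.sqrt (v ⬝ᵥ v))⁻¹ • v with hv'def
  set w' : Fin p → ℝ := (Real.sqrt (w ⬝ᵥ w))⁻¹ • w with hw'def
  have hv'v' : v' ⬝ᵥ v' = 1 := by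
    simp only [hv'def, smul_dotProduct, dotProduct_smul, smul_eq_mul]
    rw [← mul_assoc, ← mul_inv, ← Real.sqrt_mul_self (le_of_lt hvpos)]
    field_simp
    rw [Real.sq_sqrt (Real.sqrt_nonneg _)]
  have hw'w' : w' ⬝ᵥ w' = 1 := by
    simp only [hw'def, smul_dotProduct, dotProduct_smul, smul_eq_mul]
    rw [← mul_assoc, ← mul_inv, ← Real.sqrt_mul_self (le_of_lt hwpos)]
    field_simp
    rw [Real.sq_sqrt (Real.sqrt_nonneg _)]
  have hv'w' : v' ⬝ᵥ w' = 0 := by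
    simp [hv'def, hw'def, smul_dotProduct, dotProduct_smul, hvw]
  have hw'v' : w' ⬝ᵥ v' = 0 := by rw [dotProduct_comm]; exact hv'w'
  have hGv' : G *ᵥ v' = lam • v' := by
    rw [hv'def, mulVec_smul, hGv, smul_comm]
  have hGw' : G *ᵥ w' = mu • w' := by
    rw [hw'def, mulVec_smul, hGw, smul_comm]
  set e1 : Fin p → ℝ := (Real.sqrt 2)⁻¹ • (v' + w') with he1def
  set e2 : Fin p → ℝ := (Real.sqrt 2)⁻¹ • (v' - w') with he2def
  have h2 : (Real.sqrt 2)⁻¹ * (Real.sqrt 2)⁻¹ * 2 = 1 := by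
    rw [← mul_inv, ← Real.sqrt_mul_self (by norm_num : (0:ℝ) ≤ 2)]
    field_simp
    rw [Real.sq_sqrt (Real.sqrt_nonneg _)]
  have he11 : e1 ⬝ᵥ e1 = 1 := by
    simp only [he1def, smul_dotProduct, dotProduct_smul, add_dotProduct, dotProduct_add,
      hv'v', hw'w', hv'w', hw'v', smul_eq_mul]
    linear_combination h2
  have he22 : e2 ⬝ᵥ e2 = 1 := by
    simp only [he2def, smul_dotProduct, dotProduct_smul, sub_dotProduct, dotProduct_sub,
      hv'v', hw'w', hv'w', hw'v', smul_eq_mul]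
    linear_combination h2
  have he12 : e1 ⬝ᵥ e2 = 0 := by
    simp only [he1def, he2def, smul_dotProduct, dotProduct_smul, add_dotProduct,
      dotProduct_sub, hv'v', hw'w', hv'w', hw'v', smul_eq_mul]
    ring
  have he21 : e2 ⬝ᵥ e1 = 0 := by rw [dotProduct_comm]; exact he12
  have heG : e1 ⬝ᵥ (G *ᵥ e2) = (lam - mu) / 2 := by
    have : G *ᵥ e2 = (Real.sqrt 2)⁻¹ • (lam • v' - mu • w') := by
      simp only [he2def, mulVec_smul, mulVec_sub, hGv', hGw']
    rw [this]
    simp only [he1def, smul_dotProduct, dotProduct_smul, add_dotProduct, dotProduct_sub,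
      dotProduct_smul, hv'v', hw'w', hv'w', hw'v', smul_eq_mul]
    linear_combination ((lam - mu) / 2) * h2
  classical
  set f : Fin p → EuclideanSpace ℝ (Fin p) := fun a => if a = i then WithLp.toLp 2 e1 else if a = j then WithLp.toLp 2 e2 else 0 with hfdef
  have hinner : ∀ x y : EuclideanSpace ℝ (Fin p), (inner ℝ x y : ℝ) = (x : Fin p → ℝ) ⬝ᵥ y := by
    intro x y
    simp [PiLp.inner_apply, dotProduct, RCLike.inner_apply, mul_comm]
  have hON : Orthonormal ℝ (({i, j} : Set (Fin p)).restrict f) := by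
    rw [orthonormal_iff_ite]
    rintro ⟨a, ha⟩ ⟨b, hb⟩
    simp only [Set.restrict_apply, hinner]
    simp only [Set.mem_insert_iff, Set.mem_singleton_iff] at ha hb
    rcases ha with rfl | rfl <;> rcases hb with rfl | rfl <;>
      simp [Set.restrict, hfdef, hij, hij.symm, he11, he22, he12, he21, Subtype.mk_eq_mk]
  obtain ⟨b, hb⟩ := hON.exists_orthonormalBasis_extension_of_card_eq (by simp)
  have hbi : b i = (WithLp.toLp 2 e1 : EuclideanSpace ℝ (Fin p)) := by
    rw [hb i (by simp)]; simp [hfdef]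
  have hbj : b j = (WithLp.toLp 2 e2 : EuclideanSpace ℝ (Fin p)) := by
    rw [hb j (by simp)]; simp [hfdef, hij.symm]
  set U : Matrix (Fin p) (Fin p) ℝ := Matrix.of (fun k a => (b a) k) with hUdef
  refine ⟨U, ?_, ?_⟩
  · ext a c
    have h := (orthonormal_iff_ite.mp b.orthonormal) a c
    rw [hinner] at h
    simp only [Matrix.mul_apply, Matrix.transpose_apply, Matrix.one_apply, hUdef, Matrix.of_apply]
    simpa [dotProduct] using h
  · have hval : (Uᵀ * G * U) i j = e1 ⬝ᵥ (G *ᵥ e2) := by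
      simp only [Matrix.mul_apply, Matrix.transpose_apply, hUdef, Matrix.of_apply, hbi, hbj, WithLp.ofLp_toLp,
        dotProduct, mulVec, Finset.sum_mul, Finset.mul_sum]
      rw [Finset.sum_comm]
      refine Finset.sum_congr rfl fun k _ => Finset.sum_congr rfl fun l _ => by ring
    rw [hval, heG]
    exact div_ne_zero (sub_ne_zero.mpr hlm) two_ne_zero

theorem antipodal_symmetry_necessity (p : ℕ) (G H : Matrix (Fin p) (Fin p) ℝ)
    (hG : G.IsSymm) (hH : H.IsSymm)
    (hGeig : ∃ (lam mu : ℝ) (v w : Fin p → ℝ), v ≠ 0 ∧ w ≠ 0 ∧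
      G.mulVec v = lam • v ∧ G.mulVec w = mu • w ∧ lam ≠ mu)
    (hHeig : ∃ (lam mu : ℝ) (v w : Fin p → ℝ), v ≠ 0 ∧ w ≠ 0 ∧
      H.mulVec v = lam • v ∧ H.mulVec w = mu • w ∧ lam ≠ mu)
    (hsym : ∀ (U S : Matrix (Fin p) (Fin p) ℝ), Uᵀ * U = 1 →
      S.IsDiag → (∀ i, S i i = 1 ∨ S i i = -1) →
      Matrix.trace (H * Uᵀ * G * U) = Matrix.trace (S * H * S * Uᵀ * G * U)) :
    H.IsDiag := by
  intro i j hij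
  classical
  obtain ⟨U, hU, hBij⟩ := exists_orthogonal_entry p G hG hGeig i j hij
  set B : Matrix (Fin p) (Fin p) ℝ := Uᵀ * G * U with hBdef
  have hBsymm : B.IsSymm := by
    unfold Matrix.IsSymm
    rw [hBdef]
    simp [Matrix.transpose_mul, hG.eq, Matrix.mul_assoc]
  -- sign vectors
  set s1 : Fin p → ℝ := fun a => if a = i then -1 else 1 with hs1
  set s2 : Fin p → ℝ := fun a => if a = j then -1 else 1 with hs2
  set s3 : Fin p → ℝ := fun a => if a = i ∨ a = j then -1 else 1 with hs3
  have hdiagcond : ∀ s : Fin p → ℝ, (∀ a, s a = 1 ∨ s a = -1) →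
      (Matrix.diagonal s).IsDiag ∧ (∀ a, Matrix.diagonal s a a = 1 ∨ Matrix.diagonal s a a = -1) := by
    intro s hs
    exact ⟨Matrix.isDiag_diagonal s, by simpa using hs⟩
  have trace_eq : ∀ s : Fin p → ℝ,
      Matrix.trace (Matrix.diagonal s * H * Matrix.diagonal s * Uᵀ * G * U)
        = ∑ a, ∑ b, s a * H a b * s b * B b a := by
    intro s
    have hassoc : Matrix.diagonal s * H * Matrix.diagonal s * Uᵀ * G * U
        = (Matrix.diagonal s * H * Matrix.diagonal s) * B := by
      rw [hBdef]; simp only [Matrix.mul_assoc]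
    have key : ∀ (M : Matrix (Fin p) (Fin p) ℝ), (M * B).trace = ∑ a, ∑ b, M a b * B b a := by
      intro M; simp [Matrix.trace, Matrix.diag, Matrix.mul_apply]
    rw [hassoc, key]
    refine Finset.sum_congr rfl fun a _ => Finset.sum_congr rfl fun b _ => ?_
    rw [Matrix.mul_diagonal, Matrix.diagonal_mul]
  have trace0 : Matrix.trace (H * Uᵀ * G * U) = ∑ a, ∑ b, H a b * B b a := by
    have hassoc : H * Uᵀ * G * U = H * B := by
      rw [hBdef]; simp only [Matrix.mul_assoc]
    rw [hassoc]
    simp only [Matrix.trace, Matrix.diag, Matrix.mul_apply]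
  have hs1pm : ∀ a, s1 a = 1 ∨ s1 a = -1 := by
    intro a; rw [hs1]; by_cases h : a = i <;> simp [h]
  have hs2pm : ∀ a, s2 a = 1 ∨ s2 a = -1 := by
    intro a; rw [hs2]; by_cases h : a = j <;> simp [h]
  have hs3pm : ∀ a, s3 a = 1 ∨ s3 a = -1 := by
    intro a; rw [hs3]; by_cases h : a = i ∨ a = j <;> simp [h]
  have E1 := hsym U (Matrix.diagonal s1) hU (Matrix.isDiag_diagonal s1) (by simpa using hs1pm)
  have E2 := hsym U (Matrix.diagonal s2) hU (Matrix.isDiag_diagonal s2) (by simpa using hs2pm)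
  have E3 := hsym U (Matrix.diagonal s3) hU (Matrix.isDiag_diagonal s3) (by simpa using hs3pm)
  rw [trace0, trace_eq] at E1 E2 E3
  -- pointwise identity
  have hpt : ∀ a b : Fin p,
      (1 + s3 a * s3 b - s1 a * s1 b - s2 a * s2 b) * (H a b * B b a)
        = ((if a = i then (1:ℝ) else 0) * (if b = j then 1 else 0)
            + (if a = j then (1:ℝ) else 0) * (if b = i then 1 else 0)) * (4 * (H i j * B i j)) := by
    intro a b
    have hHsym : H b a = H a b := hH.apply a b
    have hB1 : B j i = B i j := hBsymm.apply i j
    have hH1 : H j i = H i j := hH.apply i j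
    by_cases ha1 : a = i <;> by_cases ha2 : a = j <;> by_cases hb1 : b = i <;>
      by_cases hb2 : b = j <;>
      simp only [hs1, hs2, hs3, ha1, ha2, hb1, hb2, if_pos, if_neg, eq_self_iff_true,
        if_true, if_false, or_self, or_true, true_or, or_false, false_or, ite_true,
        ite_false, hij, Ne.symm hij, not_false_iff, hB1, hH1, hHsym] <;>
      first
      | ring
      | (exact absurd (ha1.symm.trans ha2) hij)
      | (exact absurd (hb1.symm.trans hb2) hij)
      | simp [ha1, ha2, hb1, hb2] <;> ring
  -- sum of the combination
  have hcomb : ∑ a, ∑ b, (1 + s3 a * s3 b - s1 a * s1 b - s2 a * s2 b) * (H a b * B b a)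
      = 8 * (H i j * B i j) := by
    calc ∑ a, ∑ b, (1 + s3 a * s3 b - s1 a * s1 b - s2 a * s2 b) * (H a b * B b a)
        = ∑ a, ∑ b, ((if a = i then (1:ℝ) else 0) * (if b = j then 1 else 0)
            + (if a = j then (1:ℝ) else 0) * (if b = i then 1 else 0)) * (4 * (H i j * B i j)) := by
          exact Finset.sum_congr rfl fun a _ => Finset.sum_congr rfl fun b _ => hpt a b
      _ = 8 * (H i j * B i j) := by
          have hsum1 : ∀ (c : Fin p) (r : ℝ), ∑ b, (if b = c then (1:ℝ) else 0) * r = r := by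
            intro c r; simp [ite_mul, Finset.sum_ite_eq']
          have hinner : ∀ a : Fin p, ∑ b, ((if a = i then (1:ℝ) else 0) * (if b = j then 1 else 0)
              + (if a = j then (1:ℝ) else 0) * (if b = i then 1 else 0)) * (4 * (H i j * B i j))
              = (if a = i then (1:ℝ) else 0) * (4 * (H i j * B i j))
                + (if a = j then (1:ℝ) else 0) * (4 * (H i j * B i j)) := by
            intro a
            calc ∑ b, ((if a = i then (1:ℝ) else 0) * (if b = j then 1 else 0)
                  + (if a = j then (1:ℝ) else 0) * (if b = i then 1 else 0)) * (4 * (H i j * B i j))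
                = ∑ b, ((if a = i then (1:ℝ) else 0) * ((if b = j then (1:ℝ) else 0) * (4 * (H i j * B i j)))
                  + (if a = j then (1:ℝ) else 0) * ((if b = i then (1:ℝ) else 0) * (4 * (H i j * B i j)))) :=
                  Finset.sum_congr rfl fun b _ => by ring
              _ = _ := by
                  rw [Finset.sum_add_distrib, ← Finset.mul_sum, ← Finset.mul_sum,
                    hsum1 j (4 * (H i j * B i j)), hsum1 i (4 * (H i j * B i j))]
          rw [Finset.sum_congr rfl fun a _ => hinner a, Finset.sum_add_distrib,
            hsum1 i (4 * (H i j * B i j)), hsum1 j (4 * (H i j * B i j))]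
          ring
  have hexp : ∑ a, ∑ b, (1 + s3 a * s3 b - s1 a * s1 b - s2 a * s2 b) * (H a b * B b a)
      = (∑ a, ∑ b, H a b * B b a) + (∑ a, ∑ b, s3 a * H a b * s3 b * B b a)
        - (∑ a, ∑ b, s1 a * H a b * s1 b * B b a)
        - (∑ a, ∑ b, s2 a * H a b * s2 b * B b a) := by
    simp only [← Finset.sum_add_distrib, ← Finset.sum_sub_distrib]
    exact Finset.sum_congr rfl fun a _ => Finset.sum_congr rfl fun b _ => by ring
  have hzero : (8:ℝ) * (H i j * B i j) = 0 := by
    rw [← hcomb, hexp, ← E1, ← E2, ← E3]; ring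
  have : H i j * B i j = 0 := by linarith
  rcases mul_eq_zero.mp this with h | h
  · exact h
  · exact absurd h hBij
end

section
/- For any p×p orthogonal matrix X and vectors a, b ∈ ℝᵖ with nonincreasing entries, aᵀ (X ∘ X) b ≤ aᵀ b, with equality when X is a diagonal sign matrix. -/
open Matrix Finset

theorem orthostochastic_bound (p : ℕ) (a b : Fin p → ℝ)
    (ha : Antitone a) (hb : Antitone b)
    (X : Matrix (Fin p) (Fin p) ℝ) (hX : Xᵀ * X = 1) :
    (∑ i, ∑ j, a i * (X i j)^2 * b j ≤ ∑ i, a i * b i) ∧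
    ((X.IsDiag ∧ ∀ i, X i i = 1 ∨ X i i = -1) →
      ∑ i, ∑ j, a i * (X i j)^2 * b j = ∑ i, a i * b i) := by
  have hX' : X * Xᵀ = 1 := mul_eq_one_comm.mp hX
  constructor
  · -- D = X ∘ X is doubly stochastic
    set D : Matrix (Fin p) (Fin p) ℝ := fun i j => (X i j)^2 with hD
    have hDmem : D ∈ doublyStochastic ℝ (Fin p) := by
      rw [mem_doublyStochastic_iff_sum]
      refine ⟨fun i j => sq_nonneg _, fun i => ?_, fun j => ?_⟩
      · have := congrFun (congrFun hX' i) i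
        simpa [hD, Matrix.mul_apply, Matrix.one_apply, sq] using this
      · have := congrFun (congrFun hX j) j
        simpa [hD, Matrix.mul_apply, Matrix.one_apply, sq] using this
    obtain ⟨w, hw0, hw1, hwD⟩ := exists_eq_sum_perm_of_mem_doublyStochastic hDmem
    have hmono : Monovary a b := ha.monovary hb
    have key : ∀ i j, (X i j)^2 = ∑ σ : Equiv.Perm (Fin p),
        w σ * (σ.permMatrix ℝ i j) := by
      intro i j
      have := congrFun (congrFun hwD i) j
      simpa [hD, Matrix.sum_apply, Matrix.smul_apply, smul_eq_mul] using this.symm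
    calc ∑ i, ∑ j, a i * (X i j)^2 * b j
        = ∑ i, ∑ j, ∑ σ : Equiv.Perm (Fin p),
            w σ * (a i * (σ.permMatrix ℝ i j) * b j) := by
          refine Finset.sum_congr rfl fun i _ => Finset.sum_congr rfl fun j _ => ?_
          simp only [key, Finset.mul_sum, Finset.sum_mul]
          exact Finset.sum_congr rfl fun σ _ => by ring
      _ = ∑ i, ∑ σ : Equiv.Perm (Fin p), ∑ j,
            w σ * (a i * (σ.permMatrix ℝ i j) * b j) :=
          Finset.sum_congr rfl fun i _ => Finset.sum_comm
      _ = ∑ σ : Equiv.Perm (Fin p), ∑ i, ∑ j,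
            w σ * (a i * (σ.permMatrix ℝ i j) * b j) := Finset.sum_comm
      _ = ∑ σ : Equiv.Perm (Fin p), w σ * ∑ i, a i * b (σ i) := by
          refine Finset.sum_congr rfl fun σ _ => ?_
          rw [Finset.mul_sum]
          refine Finset.sum_congr rfl fun i _ => ?_
          simp [Equiv.Perm.permMatrix, PEquiv.toMatrix_apply, Equiv.toPEquiv_apply,
            mul_ite, Finset.sum_ite_eq', mul_comm, mul_assoc, mul_left_comm]
      _ ≤ ∑ σ : Equiv.Perm (Fin p), w σ * ∑ i, a i * b i := by
          refine Finset.sum_le_sum fun σ _ => ?_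
          exact mul_le_mul_of_nonneg_left (hmono.sum_mul_comp_perm_le_sum_mul) (hw0 σ)
      _ = ∑ i, a i * b i := by rw [← Finset.sum_mul, hw1, one_mul]
  · rintro ⟨hdiag, hsign⟩
    refine Finset.sum_congr rfl fun i _ => ?_
    rw [Finset.sum_eq_single i]
    · rcases hsign i with h | h <;> rw [h] <;> ring
    · intro j _ hj
      rw [hdiag (Ne.symm hj)]
      ring
    · simp
end

section
/- If a, b ∈ ℝᵖ have strictly decreasing entries, then an orthogonal matrix X maximizes aᵀ (X ∘ X) b over O(p) if and only if X ∘ X = I, equivalently X is a diagonal sign matrix. -/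
open Matrix

private lemma perm_eq_one_of_monovary {p : ℕ} {a b : Fin p → ℝ}
    (ha : StrictAnti a) (hb : StrictAnti b) (σ : Equiv.Perm (Fin p))
    (h : Monovary (b ∘ σ) a) : σ = 1 := by
  have hmono : StrictMono σ := by
    intro i j hij
    have h1 : a j < a i := ha hij
    have h2 : b (σ j) ≤ b (σ i) := h h1
    have h3 : σ i ≤ σ j := (hb.le_iff_ge).mp h2
    exact lt_of_le_of_ne h3 (fun e => absurd (σ.injective e) hij.ne)
  have wf : WellFoundedLT (Fin p) := inferInstance
  ext i
  have h1 : i ≤ σ i := @StrictMono.le_apply (Fin p) _ wf _ hmono i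
  have hmono' : StrictMono (σ⁻¹ : Equiv.Perm (Fin p)) := by
    intro i j hij
    by_contra hle
    push_neg at hle
    have := hmono.le_iff_le.mpr hle
    simp only [Equiv.Perm.coe_inv, Equiv.apply_symm_apply] at this
    exact absurd this (not_le.mpr hij)
  have h2 : i ≤ (σ⁻¹ : Equiv.Perm (Fin p)) i := @StrictMono.le_apply (Fin p) _ wf _ hmono' i
  have h3 : σ i ≤ i := by
    have := hmono.le_iff_le.mpr h2
    simpa using this
  simp [le_antisymm h3 h1]

private lemma ds_key {p : ℕ} {a b : Fin p → ℝ}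
    (ha : StrictAnti a) (hb : StrictAnti b) (S : Matrix (Fin p) (Fin p) ℝ)
    (hS : S ∈ doublyStochastic ℝ (Fin p)) :
    (∑ i, ∑ j, S i j * (a i * b j)) ≤ ∑ i, a i * b i ∧
      ((∑ i, ∑ j, S i j * (a i * b j)) = ∑ i, a i * b i → S = 1) := by
  obtain ⟨w, hw0, hw1, hw3⟩ := exists_eq_sum_perm_of_mem_doublyStochastic hS
  have hmv : Monovary b a := by
    intro i j hij
    exact (hb ((ha.lt_iff_gt).mp hij)).le
  set V : Equiv.Perm (Fin p) → ℝ := fun σ => ∑ i, b (σ i) * a i with hV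
  have hperm : ∀ (σ : Equiv.Perm (Fin p)) (i : Fin p),
      (∑ j, (σ.permMatrix ℝ) i j * (a i * b j)) = b (σ i) * a i := by
    intro σ i
    simp [Equiv.Perm.permMatrix, PEquiv.toMatrix_apply, Equiv.toPEquiv_apply, ite_mul,
      mul_comm]
  have h1 : ∀ σ : Equiv.Perm (Fin p),
      w σ * V σ = ∑ i, ∑ j, w σ * (σ.permMatrix ℝ) i j * (a i * b j) := by
    intro σ
    rw [hV, Finset.mul_sum]
    refine Finset.sum_congr rfl fun i _ => ?_
    rw [← hperm σ i, Finset.mul_sum]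
    exact Finset.sum_congr rfl fun j _ => by ring
  have hval : (∑ i, ∑ j, S i j * (a i * b j)) = ∑ σ : Equiv.Perm (Fin p), w σ * V σ := by
    rw [← hw3]
    calc ∑ i, ∑ j, (∑ σ : Equiv.Perm (Fin p), w σ • σ.permMatrix ℝ) i j * (a i * b j)
        = ∑ i, ∑ j, ∑ σ : Equiv.Perm (Fin p), w σ * (σ.permMatrix ℝ) i j * (a i * b j) := by
          simp [Matrix.sum_apply, Finset.sum_mul]
      _ = ∑ i, ∑ σ : Equiv.Perm (Fin p), ∑ j, w σ * (σ.permMatrix ℝ) i j * (a i * b j) :=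
          Finset.sum_congr rfl fun i _ => Finset.sum_comm
      _ = ∑ σ : Equiv.Perm (Fin p), ∑ i, ∑ j, w σ * (σ.permMatrix ℝ) i j * (a i * b j) :=
          Finset.sum_comm
      _ = ∑ σ : Equiv.Perm (Fin p), w σ * V σ :=
          Finset.sum_congr rfl fun σ _ => (h1 σ).symm
  have hVle : ∀ σ : Equiv.Perm (Fin p), V σ ≤ ∑ i, a i * b i := by
    intro σ
    have := hmv.sum_comp_perm_mul_le_sum_mul (σ := σ)
    simpa [hV, mul_comm] using this
  have hle : (∑ σ : Equiv.Perm (Fin p), w σ * V σ) ≤ ∑ i, a i * b i := by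
    calc (∑ σ : Equiv.Perm (Fin p), w σ * V σ)
        ≤ ∑ σ : Equiv.Perm (Fin p), w σ * (∑ i, a i * b i) :=
          Finset.sum_le_sum fun σ _ => mul_le_mul_of_nonneg_left (hVle σ) (hw0 σ)
      _ = ∑ i, a i * b i := by rw [← Finset.sum_mul, hw1, one_mul]
  constructor
  · rw [hval]; exact hle
  · intro heq
    rw [hval] at heq
    have hsum : (∑ σ : Equiv.Perm (Fin p), w σ * V σ)
        = ∑ σ : Equiv.Perm (Fin p), w σ * (∑ i, a i * b i) := by
      rw [heq, ← Finset.sum_mul, hw1, one_mul]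
    have heach : ∀ σ ∈ (Finset.univ : Finset (Equiv.Perm (Fin p))),
        w σ * V σ = w σ * (∑ i, a i * b i) :=
      (Finset.sum_eq_sum_iff_of_le
        (fun σ _ => mul_le_mul_of_nonneg_left (hVle σ) (hw0 σ))).mp hsum
    have hterm : ∀ σ : Equiv.Perm (Fin p), w σ • σ.permMatrix ℝ
        = w σ • (1 : Matrix (Fin p) (Fin p) ℝ) := by
      intro σ
      rcases eq_or_ne (w σ) 0 with h0 | h0
      · simp [h0]
      · have hVeq : V σ = ∑ i, a i * b i :=
          mul_left_cancel₀ h0 (heach σ (Finset.mem_univ σ))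
        have hmvσ : Monovary (b ∘ σ) a := by
          have hiff := hmv.sum_comp_perm_mul_eq_sum_mul_iff (σ := σ)
          rw [← hiff]
          simpa [hV, mul_comm] using hVeq
        have hσ1 : σ = 1 := perm_eq_one_of_monovary ha hb σ hmvσ
        subst hσ1
        congr 1
        ext i j
        simp [Equiv.Perm.permMatrix, PEquiv.toMatrix_apply, Equiv.toPEquiv_apply,
          Matrix.one_apply, eq_comm]
    rw [← hw3]
    calc (∑ σ : Equiv.Perm (Fin p), w σ • σ.permMatrix ℝ)
        = ∑ σ : Equiv.Perm (Fin p), w σ • (1 : Matrix (Fin p) (Fin p) ℝ) :=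
          Finset.sum_congr rfl fun σ _ => hterm σ
      _ = (1 : Matrix (Fin p) (Fin p) ℝ) := by rw [← Finset.sum_smul, hw1, one_smul]

private lemma sq_mem_ds {p : ℕ} (X : Matrix (Fin p) (Fin p) ℝ) (hX : Xᵀ * X = 1) :
    (Matrix.of fun i j => X i j * X i j) ∈ doublyStochastic ℝ (Fin p) := by
  have hX' : X * Xᵀ = 1 := mul_eq_one_comm.mp hX
  rw [mem_doublyStochastic_iff_sum]
  refine ⟨fun i j => mul_self_nonneg _, fun i => ?_, fun j => ?_⟩
  · have h : (X * Xᵀ) i i = 1 := by rw [hX']; simp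
    rw [Matrix.mul_apply] at h
    simpa [Matrix.transpose_apply] using h
  · have h : (Xᵀ * X) j j = 1 := by rw [hX]; simp
    rw [Matrix.mul_apply] at h
    simpa [Matrix.transpose_apply] using h

private lemma obj_eq {p : ℕ} (a b : Fin p → ℝ) (X : Matrix (Fin p) (Fin p) ℝ) :
    (∑ i, ∑ j, a i * (X i j)^2 * b j)
      = ∑ i, ∑ j, (Matrix.of fun i j => X i j * X i j) i j * (a i * b j) := by
  refine Finset.sum_congr rfl fun i _ => Finset.sum_congr rfl fun j _ => ?_
  simp only [Matrix.of_apply, pow_two]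
  ring

theorem bingham_mode_characterization (p : ℕ) (a b : Fin p → ℝ)
    (ha : StrictAnti a) (hb : StrictAnti b)
    (X : Matrix (Fin p) (Fin p) ℝ) (hX : Xᵀ * X = 1) :
    (∀ Y : Matrix (Fin p) (Fin p) ℝ, Yᵀ * Y = 1 →
        ∑ i, ∑ j, a i * (Y i j)^2 * b j ≤ ∑ i, ∑ j, a i * (X i j)^2 * b j) ↔
      ((Matrix.of fun i j => X i j * X i j) = (1 : Matrix (Fin p) (Fin p) ℝ)) := by
  have hkeyX := ds_key ha hb _ (sq_mem_ds X hX)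
  have hval1 : (∑ i, ∑ j, a i * ((1 : Matrix (Fin p) (Fin p) ℝ) i j)^2 * b j)
      = ∑ i, a i * b i := by
    refine Finset.sum_congr rfl fun i _ => ?_
    rw [Finset.sum_eq_single i]
    · simp
    · intro j _ hj
      simp [Matrix.one_apply_ne' hj]
    · simp
  constructor
  · intro hmax
    have h1 := hmax 1 (by simp)
    rw [hval1] at h1
    apply hkeyX.2
    rw [← obj_eq]
    exact le_antisymm (by rw [obj_eq]; exact hkeyX.1) h1
  · intro hid Y hY
    have hkeyY := ds_key ha hb _ (sq_mem_ds Y hY)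
    have hXval : (∑ i, ∑ j, a i * (X i j)^2 * b j) = ∑ i, a i * b i := by
      have : ∀ i j, a i * (X i j)^2 * b j
          = a i * ((Matrix.of fun i j => X i j * X i j) i j) * b j := by
        intro i j; simp [pow_two]
      calc (∑ i, ∑ j, a i * (X i j)^2 * b j)
          = ∑ i, ∑ j, a i * ((1 : Matrix (Fin p) (Fin p) ℝ) i j) * b j := by
            refine Finset.sum_congr rfl fun i _ => Finset.sum_congr rfl fun j _ => ?_
            rw [this i j, hid]
        _ = ∑ i, a i * b i := by
            refine Finset.sum_congr rfl fun i _ => ?_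
            rw [Finset.sum_eq_single i]
            · simp
            · intro j _ hj
              simp [Matrix.one_apply_ne' hj]
            · simp
    rw [hXval, obj_eq a b Y]
    exact hkeyY.1
end
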